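/- Let q and g be independent standard Gaussian N(0,1) random variables and for s ∈ ℝ, r ≥ 0 set c_d(s,r) = E[(min{|q| − |r·g + s·q|, 0})²]. Then: (i) for every s ∈ ℝ and r > 0, c_d(s,r) = (1/π)·[ ((1−s)² + r²)·(π/2 − arctan((1−s)/r)) + ((1+s)² + r²)·(π/2 − arctan((1+s)/r)) − 2r ]; (ii) c_d(s,0) = (|s| − 1)² if |s| ≥ 1, and c_d(s,0) = 0 if |s| < 1. -/

import Mathlib

open MeasureTheory ProbabilityTheory Filter Real Set Topology

noncomputable section

/-- The standard Gaussian measure `N(0,1)` on `ℝ`. -/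
def stdGaussian : Measure ℝ := gaussianReal 0 1

instance : IsProbabilityMeasure stdGaussian :=
  inferInstanceAs (IsProbabilityMeasure (gaussianReal 0 1))

/-- `c_d(s,r) = E[(min{|q| - |r g + s q|, 0})²]` for independent standard Gaussians `q, g`. -/
def cd (s r : ℝ) : ℝ :=
  ∫ p : ℝ × ℝ, (min (|p.1| - |r * p.2 + s * p.1|) 0) ^ 2
    ∂(stdGaussian.prod stdGaussian)

namespace Stmt19Aux

/-- real density of the standard gaussian -/
def φ (x : ℝ) : ℝ := gaussianPDFReal 0 1 x

lemma φ_nonneg (x : ℝ) : 0 ≤ φ x := gaussianPDFReal_nonneg 0 1 x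

lemma measurable_φ : Measurable φ := measurable_gaussianPDFReal 0 1

lemma stdGaussian_eq : _root_.stdGaussian = volume.withDensity (fun x => ((φ x).toNNReal : ENNReal)) := by
  rw [_root_.stdGaussian, gaussianReal_of_var_ne_zero 0 one_ne_zero]
  rfl

lemma prod_eq_withDensity :
    stdGaussian.prod stdGaussian
      = (volume.prod volume).withDensity
          (fun p : ℝ × ℝ => (((φ p.1).toNNReal * (φ p.2).toNNReal : NNReal) : ENNReal)) := by
  apply Measure.prod_eq
  intro s t hs ht
  rw [withDensity_apply _ (hs.prod ht)]
  have : ∀ p : ℝ × ℝ, (((φ p.1).toNNReal * (φ p.2).toNNReal : NNReal) : ENNReal)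
      = ENNReal.ofReal (φ p.1) * ENNReal.ofReal (φ p.2) := by
    intro p; push_cast; rfl
  simp_rw [this]
  rw [← Measure.prod_restrict,
    lintegral_prod_mul (f := fun x => ENNReal.ofReal (φ x)) (g := fun x => ENNReal.ofReal (φ x))
      (by exact (measurable_φ.ennreal_ofReal).aemeasurable) (by exact (measurable_φ.ennreal_ofReal).aemeasurable)]
  rw [_root_.stdGaussian, gaussianReal_apply 0 one_ne_zero s, gaussianReal_apply 0 one_ne_zero t]
  rfl

def ff (s r : ℝ) (p : ℝ × ℝ) : ℝ := (min (|p.1| - |r * p.2 + s * p.1|) 0) ^ 2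

lemma cd_eq (s r : ℝ) :
    cd s r = ∫ p : ℝ × ℝ, (φ p.1 * φ p.2) * ff s r p ∂(volume.prod volume) := by
  have h1 : cd s r = ∫ p, ff s r p ∂(stdGaussian.prod stdGaussian) := rfl
  rw [h1, prod_eq_withDensity,
    integral_withDensity_eq_integral_smul (by exact (measurable_φ.comp measurable_fst).real_toNNReal.mul (measurable_φ.comp measurable_snd).real_toNNReal) (ff s r)]
  refine integral_congr_ae (Eventually.of_forall fun p => ?_)
  dsimp only
  rw [NNReal.smul_def, smul_eq_mul]
  push_cast
  rw [Real.coe_toNNReal _ (φ_nonneg _), Real.coe_toNNReal _ (φ_nonneg _)]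

end Stmt19Aux

namespace Stmt19Aux

lemma mul_min_zero (x a : ℝ) (hx : 0 ≤ x) : min (x * a) 0 = x * min a 0 := by
  rcases le_total a 0 with h | h
  · rw [min_eq_left (mul_nonpos_of_nonneg_of_nonpos hx h), min_eq_left h]
  · rw [min_eq_right (mul_nonneg hx h), min_eq_right h, mul_zero]

/-- angular function -/
def A (s r : ℝ) (θ : ℝ) : ℝ := (min (|Real.cos θ| - |r * Real.sin θ + s * Real.cos θ|) 0) ^ 2

lemma phi_mul (u v : ℝ) : φ u * φ v = (2*π)⁻¹ * rexp (-(u^2+v^2)/2) := by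
  simp only [φ, gaussianPDFReal]
  rw [NNReal.coe_one, mul_one]
  rw [mul_mul_mul_comm, ← Real.exp_add, ← mul_inv,
    Real.mul_self_sqrt (by positivity)]
  congr 1
  ring

lemma ff_polar (s r x θ : ℝ) (hx : 0 ≤ x) :
    ff s r (x * Real.cos θ, x * Real.sin θ) = x^2 * A s r θ := by
  simp only [ff, A]
  have h1 : |x * Real.cos θ| = x * |Real.cos θ| := by
    rw [abs_mul, abs_of_nonneg hx]
  have h2 : r * (x * Real.sin θ) + s * (x * Real.cos θ)
      = x * (r * Real.sin θ + s * Real.cos θ) := by ring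
  rw [h1, h2, abs_mul, abs_of_nonneg hx, ← mul_sub, mul_min_zero _ _ hx, mul_pow]

lemma integral_polar (s r : ℝ) :
    (∫ p : ℝ × ℝ, (φ p.1 * φ p.2) * ff s r p ∂(volume.prod volume))
      = (∫ x in Ioi (0:ℝ), x^3 * rexp (-x^2/2)) * ∫ θ in Ioo (-π) π, (2*π)⁻¹ * A s r θ := by
  rw [show ((volume : Measure ℝ).prod volume) = (volume : Measure (ℝ×ℝ)) from rfl,
    ← integral_comp_polarCoord_symm]
  have heq : EqOn
      (fun p : ℝ × ℝ => p.1 • ((φ (polarCoord.symm p).1 * φ (polarCoord.symm p).2)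
        * ff s r (polarCoord.symm p)))
      (fun p : ℝ × ℝ => (p.1^3 * rexp (-p.1^2/2)) * ((2*π)⁻¹ * A s r p.2))
      polarCoord.target := by
    rintro ⟨x, θ⟩ ⟨hx, -⟩
    have hx' : (0:ℝ) ≤ x := le_of_lt hx
    have hsymm : polarCoord.symm (x, θ) = (x * Real.cos θ, x * Real.sin θ) := rfl
    simp only [hsymm, smul_eq_mul]
    rw [phi_mul, ff_polar s r x θ hx']
    have hsq : (x * Real.cos θ)^2 + (x * Real.sin θ)^2 = x^2 := by
      have := Real.sin_sq_add_cos_sq θ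
      ring_nf
      nlinarith [this]
    rw [hsq]
    ring
  rw [setIntegral_congr_fun polarCoord.open_target.measurableSet heq]
  rw [show polarCoord.target = Ioi (0:ℝ) ×ˢ Ioo (-π) π from rfl]
  rw [show (volume : Measure (ℝ×ℝ)) = (volume : Measure ℝ).prod volume from rfl,
    ← Measure.prod_restrict]
  exact integral_prod_mul (μ := volume.restrict (Ioi (0:ℝ)))
    (ν := volume.restrict (Ioo (-π) π))
    (fun x => x^3 * rexp (-x^2/2)) (fun θ => (2*π)⁻¹ * A s r θ)

lemma radial : (∫ x in Ioi (0:ℝ), x^3 * rexp (-x^2/2)) = 2 := by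
  have hderiv : ∀ x ∈ Ici (0:ℝ),
      HasDerivAt (fun t : ℝ => -(t^2+2) * rexp (-t^2/2)) (x^3 * rexp (-x^2/2)) x := by
    intro x _
    have h1 : HasDerivAt (fun t : ℝ => -t^2/2) (-x) x := by
      simpa [neg_div] using ((hasDerivAt_pow 2 x).div_const 2).fun_neg
    have h2 := h1.exp
    have h3 : HasDerivAt (fun t : ℝ => -(t^2+2)) (-(2*x)) x := by
      simpa using ((hasDerivAt_pow 2 x).add_const 2).fun_neg
    have key : HasDerivAt (fun t : ℝ => -(t^2+2) * rexp (-t^2/2)) _ x := h3.mul h2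
    convert key using 1
    ring
  have htop : Tendsto (fun t : ℝ => -(t^2+2) * rexp (-t^2/2)) atTop (𝓝 0) := by
    have houter : Tendsto (fun y : ℝ => -(2*y+2) * rexp (-y)) atTop (𝓝 0) := by
      have l1 := Real.tendsto_pow_mul_exp_neg_atTop_nhds_zero 1
      have l2 := Real.tendsto_exp_neg_atTop_nhds_zero
      have h := ((l1.const_mul (-2)).add (l2.const_mul (-2)))
      simp only [mul_zero, add_zero, pow_one] at h
      exact h.congr (fun y => by ring)
    have hinner : Tendsto (fun t : ℝ => t^2/2) atTop atTop :=
      (tendsto_pow_atTop two_ne_zero).atTop_div_const (by norm_num)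
    have := houter.comp hinner
    refine this.congr (fun t => ?_)
    simp only [Function.comp_apply, neg_div]
    ring_nf
  have := integral_Ioi_of_hasDerivAt_of_nonneg' hderiv
    (fun x hx => mul_nonneg (pow_nonneg (le_of_lt hx) 3) (Real.exp_nonneg _)) htop
  rw [this]
  norm_num

end Stmt19Aux

namespace Stmt19Aux

lemma A_cont (s r : ℝ) : Continuous (A s r) := by
  unfold A
  fun_prop

lemma A_shift (s r θ : ℝ) : A s r (θ - π) = A s r θ := by
  unfold A
  rw [Real.cos_sub_pi, Real.sin_sub_pi]
  rw [show r * -Real.sin θ + s * -Real.cos θ = -(r * Real.sin θ + s * Real.cos θ) by ring,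
    abs_neg, abs_neg]

lemma A_shift' (s r θ : ℝ) : A s r (θ + π) = A s r θ := by
  have := A_shift s r (θ + π)
  simpa using this.symm

lemma J_eq (s r : ℝ) :
    (∫ θ in Ioo (-π) π, A s r θ)
      = 2 * ∫ θ in Ioo (-(π/2)) (π/2), A s r θ := by
  have hii : ∀ u v : ℝ, u ≤ v → (∫ θ in Ioo u v, A s r θ) = ∫ θ in u..v, A s r θ := by
    intro u v h
    rw [intervalIntegral.integral_of_le h, integral_Ioc_eq_integral_Ioo]
  rw [hii _ _ (by linarith [Real.pi_pos]), hii _ _ (by linarith [Real.pi_pos])]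
  have hInt : ∀ u v : ℝ, IntervalIntegrable (A s r) volume u v :=
    fun u v => (A_cont s r).intervalIntegrable u v
  have split1 : (∫ θ in (-π)..(-(π/2)), A s r θ) + (∫ θ in (-(π/2))..(π/2), A s r θ)
      = ∫ θ in (-π)..(π/2), A s r θ :=
    intervalIntegral.integral_add_adjacent_intervals (hInt _ _) (hInt _ _)
  have split2 : (∫ θ in (-π)..(π/2), A s r θ) + (∫ θ in (π/2)..π, A s r θ)
      = ∫ θ in (-π)..π, A s r θ :=
    intervalIntegral.integral_add_adjacent_intervals (hInt _ _) (hInt _ _)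
  have left : (∫ θ in (-π)..(-(π/2)), A s r θ) = ∫ θ in (0:ℝ)..(π/2), A s r θ := by
    have := intervalIntegral.integral_comp_sub_right (a := (0:ℝ)) (b := π/2) (A s r) π
    rw [zero_sub, show π/2 - π = -(π/2) by ring] at this
    rw [← this]
    simp only [A_shift]
  have right : (∫ θ in (π/2)..π, A s r θ) = ∫ θ in (-(π/2))..(0:ℝ), A s r θ := by
    have := intervalIntegral.integral_comp_add_right (a := (-(π/2))) (b := (0:ℝ)) (A s r) π
    rw [zero_add, show -(π/2) + π = π/2 by ring] at this
    rw [← this]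
    simp only [A_shift']
  have split3 : (∫ θ in (-(π/2))..(0:ℝ), A s r θ) + (∫ θ in (0:ℝ)..(π/2), A s r θ)
      = ∫ θ in (-(π/2))..(π/2), A s r θ :=
    intervalIntegral.integral_add_adjacent_intervals (hInt _ _) (hInt _ _)
  have hmm : π/2 ≤ π := by linarith [Real.pi_pos]
  linarith [split1, split2, split3, left, right]

/-- after tangent substitution -/
def B (s r : ℝ) (t : ℝ) : ℝ := (min (1 - |r*t+s|) 0)^2 / (1+t^2)^2

lemma sub_arctan (s r : ℝ) :
    (∫ θ in Ioo (-(π/2)) (π/2), A s r θ) = ∫ t, B s r t := by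
  have himg : Real.arctan '' univ = Ioo (-(π/2)) (π/2) := by
    rw [image_univ, Real.range_arctan]
  rw [← himg,
    integral_image_eq_integral_abs_deriv_smul MeasurableSet.univ
      (fun x _ => (Real.hasDerivAt_arctan x).hasDerivWithinAt)
      (Real.arctan_injective.injOn) (A s r),
    setIntegral_univ]
  refine integral_congr_ae (Eventually.of_forall fun t => ?_)
  have hc : (0:ℝ) < Real.sqrt (1 + t^2) := Real.sqrt_pos.mpr (by positivity)
  have hc2 : (Real.sqrt (1 + t^2))^2 = 1 + t^2 := Real.sq_sqrt (by positivity)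
  dsimp only
  rw [smul_eq_mul]
  unfold A B
  rw [Real.cos_arctan, Real.sin_arctan]
  have e1 : |1 / Real.sqrt (1 + t^2)| = (Real.sqrt (1 + t^2))⁻¹ := by
    rw [abs_of_pos (by positivity), one_div]
  have e2 : r * (t / Real.sqrt (1 + t^2)) + s * (1 / Real.sqrt (1 + t^2))
      = (Real.sqrt (1 + t^2))⁻¹ * (r * t + s) := by
    field_simp
  rw [e1, e2, abs_mul, abs_of_nonneg (by positivity : (0:ℝ) ≤ (Real.sqrt (1 + t^2))⁻¹)]
  rw [show (Real.sqrt (1 + t^2))⁻¹ - (Real.sqrt (1 + t^2))⁻¹ * |r * t + s|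
      = (Real.sqrt (1 + t^2))⁻¹ * (1 - |r * t + s|) by ring]
  rw [mul_min_zero _ _ (by positivity), mul_pow, inv_pow, hc2]
  rw [abs_of_pos (by positivity : (0:ℝ) < 1 / (1 + t^2))]
  have hne : ((1:ℝ)+t^2) ≠ 0 := by positivity
  generalize (min (1 - |r*t+s|) (0:ℝ)) = m
  field_simp

end Stmt19Aux

namespace Stmt19Aux

def F (c t : ℝ) : ℝ := ((1+c^2)/2) * Real.arctan t + (c^2-1)*t/(2*(1+t^2)) + c/(1+t^2)

lemma F_deriv (c t : ℝ) : HasDerivAt (F c) ((t-c)^2/(1+t^2)^2) t := by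
  have hne : ((1:ℝ)+t^2) ≠ 0 := by positivity
  have h1 : HasDerivAt (fun u : ℝ => ((1+c^2)/2) * Real.arctan u)
      (((1+c^2)/2) * (1/(1+t^2))) t := (Real.hasDerivAt_arctan t).const_mul _
  have hnum : HasDerivAt (fun u : ℝ => (c^2-1)*u) (c^2-1) t := by
    simpa using (hasDerivAt_id t).const_mul (c^2-1)
  have hden : HasDerivAt (fun u : ℝ => 2*(1+u^2)) (2*(2*t)) t := by
    have : HasDerivAt (fun u : ℝ => 1+u^2) (2*t) t := by
      simpa using ((hasDerivAt_pow 2 t).const_add 1)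
    simpa using this.const_mul 2
  have h2 : HasDerivAt (fun u : ℝ => (c^2-1)*u/(2*(1+u^2)))
      (((c^2-1)*(2*(1+t^2)) - (c^2-1)*t*(2*(2*t)))/(2*(1+t^2))^2) t :=
    hnum.div hden (by positivity)
  have hnum3 : HasDerivAt (fun _ : ℝ => c) 0 t := hasDerivAt_const t c
  have hden3 : HasDerivAt (fun u : ℝ => 1+u^2) (2*t) t := by
    simpa using ((hasDerivAt_pow 2 t).const_add 1)
  have h3 : HasDerivAt (fun u : ℝ => c/(1+u^2))
      ((0*(1+t^2) - c*(2*t))/(1+t^2)^2) t := hnum3.div hden3 hne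
  have := (h1.add h2).add h3
  have key : HasDerivAt (F c) _ t := this
  convert key using 1
  field_simp
  ring

lemma tendsto_inv_one_add_sq : Tendsto (fun t : ℝ => 1/(1+t^2)) atTop (𝓝 0) := by
  have h := tendsto_inv_atTop_zero.comp
    (tendsto_atTop_add_const_left atTop 1 (tendsto_pow_atTop (two_ne_zero) : Tendsto (fun t : ℝ => t^2) atTop atTop))
  refine h.congr fun t => ?_
  simp [Function.comp, one_div]

lemma tendsto_t_div_one_add_sq : Tendsto (fun t : ℝ => t/(1+t^2)) atTop (𝓝 0) := by
  refine tendsto_of_tendsto_of_tendsto_of_le_of_le' tendsto_const_nhds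
    tendsto_inv_atTop_zero ?_ ?_
  · filter_upwards [eventually_ge_atTop (1:ℝ)] with t ht
    positivity
  · filter_upwards [eventually_ge_atTop (1:ℝ)] with t ht
    have ht0 : (0:ℝ) < t := by linarith
    rw [div_le_iff₀ (by positivity)]
    rw [inv_mul_eq_div, le_div_iff₀ ht0]
    nlinarith

lemma F_tendsto (c : ℝ) : Tendsto (F c) atTop (𝓝 (((1+c^2)/2) * (π/2))) := by
  have h1 : Tendsto (fun t : ℝ => ((1+c^2)/2) * Real.arctan t) atTop (𝓝 (((1+c^2)/2) * (π/2))) :=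
    (tendsto_nhds_of_tendsto_nhdsWithin Real.tendsto_arctan_atTop).const_mul _
  have h2 : Tendsto (fun t : ℝ => (c^2-1)*t/(2*(1+t^2))) atTop (𝓝 0) := by
    have := tendsto_t_div_one_add_sq.const_mul ((c^2-1)/2)
    rw [mul_zero] at this
    refine this.congr fun t => ?_
    field_simp
  have h3 : Tendsto (fun t : ℝ => c/(1+t^2)) atTop (𝓝 0) := by
    have := tendsto_inv_one_add_sq.const_mul c
    rw [mul_zero] at this
    refine this.congr fun t => ?_
    field_simp
  have := (h1.add h2).add h3
  rw [add_zero, add_zero] at this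
  exact this

lemma tail (c : ℝ) :
    ∫ t in Ioi c, (t-c)^2/(1+t^2)^2 = (1+c^2)/2 * (π/2 - Real.arctan c) - c/2 := by
  rw [integral_Ioi_of_hasDerivAt_of_nonneg' (fun x _ => F_deriv c x)
    (fun x _ => by positivity) (F_tendsto c)]
  have hF : F c c = (1+c^2)/2 * Real.arctan c + c/2 := by
    unfold F
    have hne : ((1:ℝ)+c^2) ≠ 0 := by positivity
    field_simp
    ring
  rw [hF]
  ring

lemma B_cont (s r : ℝ) : Continuous (B s r) := by
  unfold B
  apply Continuous.div
  · fun_prop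
  · fun_prop
  · intro t; positivity

lemma B_nonneg (s r t : ℝ) : 0 ≤ B s r t := by unfold B; positivity

lemma B_integrable (s r : ℝ) : Integrable (B s r) := by
  set C : ℝ := 2 + 4*s^2 + 4*r^2 with hC
  have hC0 : (0:ℝ) < C := by positivity
  apply Integrable.mono' (integrable_inv_one_add_sq.const_mul C)
    (B_cont s r).aestronglyMeasurable
  refine Eventually.of_forall fun t => ?_
  rw [Real.norm_eq_abs, abs_of_nonneg (B_nonneg s r t)]
  unfold B
  rw [div_le_iff₀ (by positivity)]
  have h1 : |min (1 - |r*t+s|) 0| ≤ 1 + |r*t+s| := by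
    rw [abs_le]
    constructor
    · exact le_min (by linarith [abs_nonneg (r*t+s)]) (by linarith [abs_nonneg (r*t+s)])
    · calc min (1 - |r*t+s|) 0 ≤ 0 := min_le_right _ _
        _ ≤ 1 + |r*t+s| := by positivity
  have h2 : (min (1 - |r*t+s|) 0)^2 ≤ (1 + |r*t+s|)^2 := by
    rw [← sq_abs]
    exact pow_le_pow_left₀ (abs_nonneg _) h1 2
  have h3 : (1 + |r*t+s|)^2 ≤ 2 + 2*(r*t+s)^2 := by
    have := sq_abs (r*t+s)
    nlinarith [abs_nonneg (r*t+s), sq_nonneg (1 - |r*t+s|)]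
  have h4 : 2 + 2*(r*t+s)^2 ≤ C * (1+t^2) := by
    rw [hC]
    nlinarith [sq_nonneg (r*t), sq_nonneg s, sq_nonneg (s*t), sq_nonneg (r - s*t), sq_nonneg t, sq_nonneg r]
  calc (min (1 - |r*t+s|) 0)^2 ≤ 2 + 2*(r*t+s)^2 := le_trans h2 h3
    _ ≤ C * (1+t^2) := h4
    _ ≤ C * (1+t^2)⁻¹ * (1+t^2)^2 := by
        have hid : ((1:ℝ)+t^2)⁻¹ * (1+t^2)^2 = 1+t^2 := by field_simp
        rw [mul_assoc, hid]

lemma K_eq (s r : ℝ) (hr : 0 < r) :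
    (∫ t, B s r t)
      = ((1-s)^2+r^2)/2 * (π/2 - Real.arctan ((1-s)/r))
        + ((1+s)^2+r^2)/2 * (π/2 - Real.arctan ((1+s)/r)) - r := by
  set a : ℝ := (1-s)/r with ha
  set b : ℝ := (1+s)/r with hb
  have hra : r * a = 1 - s := by rw [ha]; field_simp
  have hrb : r * b = 1 + s := by rw [hb]; field_simp
  have hba : -b < a := by
    rw [ha, hb, ← neg_div, div_lt_div_iff_of_pos_right hr]
    nlinarith
  have hBi := B_integrable s r
  -- split the line at -b
  rw [← intervalIntegral.integral_Iic_add_Ioi (b := -b) hBi.integrableOn hBi.integrableOn]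
  -- split (−b, ∞) at a
  rw [← Set.Ioc_union_Ioi_eq_Ioi (le_of_lt hba),
    setIntegral_union (Set.Ioc_disjoint_Ioi le_rfl) measurableSet_Ioi
      hBi.integrableOn hBi.integrableOn]
  -- middle piece vanishes
  have hmid : (∫ t in Ioc (-b) a, B s r t) = 0 := by
    rw [setIntegral_congr_fun measurableSet_Ioc
      (fun t ht => show B s r t = 0 from ?_), integral_zero]
    have h1 : r * t + s ≤ 1 := by
      have := mul_le_mul_of_nonneg_left ht.2 (le_of_lt hr)
      rw [hra] at this
      linarith
    have h2 : -1 < r * t + s := by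
      have := mul_lt_mul_of_pos_left ht.1 hr
      rw [mul_neg, hrb] at this
      linarith
    have habs : |r * t + s| ≤ 1 := abs_le.mpr ⟨le_of_lt h2, h1⟩
    unfold B
    rw [min_eq_right (by linarith), zero_pow (by norm_num), zero_div]
  -- right tail
  have hright : (∫ t in Ioi a, B s r t)
      = r^2 * ((1+a^2)/2 * (π/2 - Real.arctan a) - a/2) := by
    rw [setIntegral_congr_fun measurableSet_Ioi
      (fun t (ht : a < t) => show B s r t = r^2 * ((t-a)^2/(1+t^2)^2) from ?_)]
    · rw [integral_const_mul, tail]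
    have h1 : 1 < r * t + s := by
      have := mul_lt_mul_of_pos_left ht hr
      rw [hra] at this
      linarith
    unfold B
    rw [min_eq_left (by rw [abs_of_pos (by linarith)]; linarith)]
    rw [abs_of_pos (by linarith)]
    have : (1 - (r*t+s))^2 = r^2 * (t-a)^2 := by
      have h2 : r * t - (1 - s) = r * (t - a) := by rw [← hra]; ring
      calc (1 - (r*t+s))^2 = (r*t - (1-s))^2 := by ring
        _ = (r*(t-a))^2 := by rw [h2]
        _ = r^2 * (t-a)^2 := by ring
    rw [this, mul_div_assoc]
  -- left tail
  have hleft : (∫ t in Iic (-b), B s r t)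
      = r^2 * ((1+b^2)/2 * (π/2 - Real.arctan b) - b/2) := by
    have hneg := integral_comp_neg_Iic (-b) (fun t => B s r (-t))
    simp only [neg_neg] at hneg
    rw [hneg]
    rw [setIntegral_congr_fun measurableSet_Ioi
      (fun t (ht : b < t) => show B s r (-t) = r^2 * ((t-b)^2/(1+t^2)^2) from ?_)]
    · rw [integral_const_mul, tail]
    have h1 : 1 < r * t - s := by
      have := mul_lt_mul_of_pos_left ht hr
      rw [hrb] at this
      linarith
    unfold B
    rw [show r * -t + s = -(r*t - s) by ring, abs_neg]
    rw [min_eq_left (by rw [abs_of_pos (by linarith)]; linarith)]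
    rw [abs_of_pos (by linarith)]
    have heq : (1 - (r*t-s))^2 = r^2 * (t-b)^2 := by
      have h2 : r * t - (1 + s) = r * (t - b) := by rw [← hrb]; ring
      calc (1 - (r*t-s))^2 = (r*t - (1+s))^2 := by ring
        _ = (r*(t-b))^2 := by rw [h2]
        _ = r^2 * (t-b)^2 := by ring
    rw [show (-t:ℝ)^2 = t^2 by ring, heq, mul_div_assoc]
  rw [hmid, hright, hleft]
  have h_a : r^2 * (1+a^2) = r^2 + (1-s)^2 := by
    have : r^2 * a^2 = (r*a)^2 := by ring
    rw [mul_add, mul_one, this, hra]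
  have h_b : r^2 * (1+b^2) = r^2 + (1+s)^2 := by
    have : r^2 * b^2 = (r*b)^2 := by ring
    rw [mul_add, mul_one, this, hrb]
  have h_ra2 : r^2 * a = r * (1-s) := by
    calc r^2 * a = r * (r * a) := by ring
      _ = r * (1-s) := by rw [hra]
  have h_rb2 : r^2 * b = r * (1+s) := by
    calc r^2 * b = r * (r * b) := by ring
      _ = r * (1+s) := by rw [hrb]
  linear_combination ((π/2 - Real.arctan a)/2) * h_a + ((π/2 - Real.arctan b)/2) * h_b
    - h_ra2/2 - h_rb2/2

end Stmt19Aux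

namespace Stmt19Aux

lemma tendsto_poly_exp : Tendsto (fun t : ℝ => (t^2+2) * rexp (-t^2/2)) atTop (𝓝 0) := by
  have houter : Tendsto (fun y : ℝ => (2*y+2) * rexp (-y)) atTop (𝓝 0) := by
    have l1 := Real.tendsto_pow_mul_exp_neg_atTop_nhds_zero 1
    have l2 := Real.tendsto_exp_neg_atTop_nhds_zero
    have h := ((l1.const_mul (2:ℝ)).add (l2.const_mul (2:ℝ)))
    simp only [mul_zero, add_zero, pow_one] at h
    exact h.congr (fun y => by ring)
  have hinner : Tendsto (fun t : ℝ => t^2/2) atTop atTop :=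
    (tendsto_pow_atTop two_ne_zero).atTop_div_const (by norm_num)
  have := houter.comp hinner
  refine this.congr (fun t => ?_)
  simp only [Function.comp_apply, neg_div]
  ring_nf

lemma integrable_sq_exp : Integrable (fun x : ℝ => x^2 * rexp (-x^2/2)) := by
  apply Integrable.mono' ((integrable_exp_neg_mul_sq (by norm_num : (0:ℝ) < 1/4)).const_mul 4)
    ((by continuity : Continuous fun x : ℝ => x^2 * rexp (-x^2/2)).aestronglyMeasurable)
  refine Eventually.of_forall fun x => ?_
  rw [Real.norm_eq_abs, abs_of_nonneg (by positivity)]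
  have hsplit : rexp (-x^2/2) = rexp (-(1/4)*x^2) * rexp (-(1/4)*x^2) := by
    rw [← Real.exp_add]; congr 1; ring
  have key : x^2 * rexp (-(1/4)*x^2) ≤ 4 := by
    have h1 : 1 + x^2/4 ≤ rexp (x^2/4) := by linarith [Real.add_one_le_exp (x^2/4)]
    have h2 : rexp (-(1/4)*x^2) = (rexp (x^2/4))⁻¹ := by rw [← Real.exp_neg]; congr 1; ring
    rw [h2, ← div_eq_mul_inv, div_le_iff₀ (Real.exp_pos _)]
    nlinarith [Real.exp_pos (x^2/4)]
  rw [hsplit]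
  nlinarith [mul_nonneg (sub_nonneg.mpr key) (Real.exp_nonneg (-(1/4)*x^2)),
    Real.exp_nonneg (-(1/4)*x^2)]

lemma integrable_exp_half : Integrable (fun x : ℝ => rexp (-x^2/2)) := by
  have heq : (fun x : ℝ => rexp (-x^2/2)) = fun x : ℝ => rexp (-(1/2:ℝ)*x^2) := by
    funext x; congr 1; ring
  rw [heq]
  exact integrable_exp_neg_mul_sq (by norm_num)

lemma integral_sq_exp : (∫ x : ℝ, x^2 * rexp (-x^2/2)) = Real.sqrt (2*π) := by
  have hderiv : ∀ x : ℝ, HasDerivAt (fun t : ℝ => t * rexp (-t^2/2))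
      (rexp (-x^2/2) - x^2 * rexp (-x^2/2)) x := by
    intro x
    have h1 : HasDerivAt (fun t : ℝ => -t^2/2) (-x) x := by
      simpa [neg_div] using ((hasDerivAt_pow 2 x).div_const 2).fun_neg
    have h2 := h1.exp
    have key : HasDerivAt (fun t : ℝ => t * rexp (-t^2/2)) _ x := (hasDerivAt_id x).mul h2
    convert key using 1
    simp only [id_eq, one_mul]
    ring
  have h' : Integrable (fun x : ℝ => rexp (-x^2/2) - x^2 * rexp (-x^2/2)) :=
    integrable_exp_half.sub integrable_sq_exp
  have htop : Tendsto (fun t : ℝ => t * rexp (-t^2/2)) atTop (𝓝 0) := by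
    refine tendsto_of_tendsto_of_tendsto_of_le_of_le' tendsto_const_nhds tendsto_poly_exp ?_ ?_
    · filter_upwards [eventually_ge_atTop (0:ℝ)] with t ht
      positivity
    · filter_upwards [eventually_ge_atTop (0:ℝ)] with t ht
      have : t ≤ t^2 + 2 := by nlinarith
      exact mul_le_mul_of_nonneg_right this (Real.exp_nonneg _)
  have hbot : Tendsto (fun t : ℝ => t * rexp (-t^2/2)) atBot (𝓝 0) := by
    have h := (htop.comp tendsto_neg_atBot_atTop).neg
    rw [neg_zero] at h
    refine h.congr fun t => ?_
    simp only [Function.comp_apply, neg_sq, neg_mul, neg_neg]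
  have hkey := integral_of_hasDerivAt_of_tendsto hderiv h' hbot htop
  rw [integral_sub integrable_exp_half integrable_sq_exp, sub_zero] at hkey
  have hgauss : (∫ x : ℝ, rexp (-x^2/2)) = Real.sqrt (2*π) := by
    have h := integral_gaussian (1/2)
    rw [show Real.sqrt (π/(1/2)) = Real.sqrt (2*π) by congr 1; ring] at h
    rw [← h]
    have heq : (fun x : ℝ => rexp (-x^2/2)) = fun x : ℝ => rexp (-(1/2:ℝ)*x^2) := by
      funext x; congr 1; ring
    rw [heq]
  linarith

lemma M2 : (∫ x, x^2 ∂stdGaussian) = 1 := by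
  rw [stdGaussian_eq, integral_withDensity_eq_integral_smul measurable_φ.real_toNNReal]
  have hpt : ∀ x : ℝ, (φ x).toNNReal • (x^2)
      = (Real.sqrt (2*π))⁻¹ * (x^2 * rexp (-x^2/2)) := by
    intro x
    rw [NNReal.smul_def, Real.coe_toNNReal _ (φ_nonneg x), smul_eq_mul]
    simp only [φ, gaussianPDFReal, NNReal.coe_one, mul_one, sub_zero]
    ring
  simp_rw [hpt]
  rw [integral_const_mul, integral_sq_exp,
    inv_mul_cancel₀ (by positivity : Real.sqrt (2*π) ≠ 0)]

end Stmt19Aux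


/-- **Closed form of `c_d`.** (i) For `r > 0`,
`c_d(s,r) = (1/π)[((1-s)² + r²)(π/2 - arctan((1-s)/r))
           + ((1+s)² + r²)(π/2 - arctan((1+s)/r)) - 2r]`;
(ii) `c_d(s,0) = (|s| - 1)²` if `|s| ≥ 1` and `c_d(s,0) = 0` if `|s| < 1`. -/
theorem stmt19 :
    (∀ s r : ℝ, 0 < r →
      cd s r = (1 / π) *
        (((1 - s) ^ 2 + r ^ 2) * (π / 2 - Real.arctan ((1 - s) / r))
          + ((1 + s) ^ 2 + r ^ 2) * (π / 2 - Real.arctan ((1 + s) / r)) - 2 * r)) ∧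
    (∀ s : ℝ, (1 ≤ |s| → cd s 0 = (|s| - 1) ^ 2) ∧ (|s| < 1 → cd s 0 = 0)) := by
  constructor
  · intro s r hr
    rw [Stmt19Aux.cd_eq, Stmt19Aux.integral_polar, Stmt19Aux.radial,
      integral_const_mul, Stmt19Aux.J_eq, Stmt19Aux.sub_arctan, Stmt19Aux.K_eq s r hr]
    have hπ : (π:ℝ) ≠ 0 := Real.pi_ne_zero
    field_simp
  · intro s
    have h0 : cd s 0 = ∫ p : ℝ × ℝ, (min (|p.1| - |0 * p.2 + s * p.1|) 0)^2
        ∂(stdGaussian.prod stdGaussian) := rfl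
    constructor
    · intro hs
      have h1 : cd s 0 = ∫ p : ℝ × ℝ, ((|s|-1)^2 * p.1^2) * 1
          ∂(stdGaussian.prod stdGaussian) := by
        rw [h0]
        refine integral_congr_ae (Eventually.of_forall fun p => ?_)
        dsimp only
        rw [zero_mul, zero_add, abs_mul]
        rw [show |p.1| - |s| * |p.1| = (1 - |s|) * |p.1| by ring]
        rw [min_eq_left (mul_nonpos_iff.mpr (Or.inr ⟨by linarith, abs_nonneg _⟩))]
        rw [mul_pow, sq_abs, mul_one]
        ring
      rw [h1, integral_prod_mul (μ := stdGaussian) (ν := stdGaussian)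
        (fun x => (|s|-1)^2 * x^2) (fun _ => (1:ℝ))]
      rw [integral_const_mul, Stmt19Aux.M2, integral_const]
      simp
    · intro hs
      have h1 : cd s 0 = ∫ p : ℝ × ℝ, (0:ℝ) ∂(stdGaussian.prod stdGaussian) := by
        rw [h0]
        refine integral_congr_ae (Eventually.of_forall fun p => ?_)
        dsimp only
        rw [zero_mul, zero_add, abs_mul]
        rw [show |p.1| - |s| * |p.1| = (1 - |s|) * |p.1| by ring]
        rw [min_eq_right (mul_nonneg (by linarith) (abs_nonneg _))]
        norm_num
      rw [h1, integral_zero]
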